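/- Let 𝒜_1, ..., 𝒜_t be t mutually orthogonal partitions of a finite set A, and let m be the smallest positive integer satisfying t·f(m) ≤ C(m,2), where f(m) = m/2 if m is even and f(m) = (m+3)/2 if m is odd, and C(m,2) is the binomial coefficient. Then for every nonempty subset B ⊆ A with |B| < m there exist an index i ∈ {1,...,t} and a block C ∈ 𝒜_i such that |B ∩ C| = 1. -/

import Mathlib

/-- Lemma on mutually orthogonal partitions: let `𝒫 1, ..., 𝒫 t` be mutually orthogonal
partitions of a finite set `A`, and let `m` be the smallest positive integer with
`t·f(m) ≤ C(m,2)` (equivalently `t·m ≤ m(m-1)` for even `m` and `t·(m+3) ≤ m(m-1)` for odd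
`m`).  Then every nonempty `B ⊆ A` with `|B| < m` meets some block of some partition in
exactly one element. -/
theorem stmt_16 {α : Type*} [DecidableEq α] (A : Finset α) (t m : ℕ)
    (P : Fin t → Finset (Finset α))
    (hblocks : ∀ i, ∀ X ∈ P i, X ⊆ A ∧ X.Nonempty)
    (hpart : ∀ i, ∀ a ∈ A, ∃! X, X ∈ P i ∧ a ∈ X)
    (horth : ∀ i j, i ≠ j → ∀ X ∈ P i, ∀ Y ∈ P j, (X ∩ Y).card ≤ 1)
    (hm₀ : 0 < m)
    (hm₁ : (if Even m then t * m else t * (m + 3)) ≤ m * (m - 1))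
    (hm₂ : ∀ m', 0 < m' →
      (if Even m' then t * m' else t * (m' + 3)) ≤ m' * (m' - 1) → m ≤ m')
    (B : Finset α) (hBA : B ⊆ A) (hBne : B.Nonempty) (hBcard : B.card < m) :
    ∃ i, ∃ C ∈ P i, (B ∩ C).card = 1 := by
  classical
  by_contra hcon
  push_neg at hcon
  set b := B.card with hb
  have hb1 : 1 ≤ b := hBne.card_pos
  set T : Fin t → Finset (Finset α) := fun i => (P i).filter (fun X => (B ∩ X).Nonempty)
    with hT
  set S : Fin t → Finset (α × α) := fun i => (T i).biUnion (fun X => (B ∩ X).offDiag)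
    with hS
  have hmemT : ∀ i X, X ∈ T i ↔ X ∈ P i ∧ (B ∩ X).Nonempty := by
    intro i X; rw [hT]; simp
  have hdisjT : ∀ i, ∀ X ∈ T i, ∀ Y ∈ T i, X ≠ Y → Disjoint (B ∩ X) (B ∩ Y) := by
    intro i X hX Y hY hXY
    rw [Finset.disjoint_left]
    intro a haX haY
    have haB : a ∈ B := (Finset.mem_inter.mp haX).1
    obtain ⟨Z, hZ, hZuniq⟩ := hpart i a (hBA haB)
    exact hXY ((hZuniq X ⟨((hmemT i X).mp hX).1, (Finset.mem_inter.mp haX).2⟩).trans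
      (hZuniq Y ⟨((hmemT i Y).mp hY).1, (Finset.mem_inter.mp haY).2⟩).symm)
  have hcover : ∀ i, B = (T i).biUnion (fun X => B ∩ X) := by
    intro i
    apply Finset.Subset.antisymm
    · intro a ha
      obtain ⟨X, ⟨hXP, haX⟩, _⟩ := hpart i a (hBA ha)
      exact Finset.mem_biUnion.mpr ⟨X, (hmemT i X).mpr ⟨hXP, ⟨a, Finset.mem_inter.mpr ⟨ha, haX⟩⟩⟩,
        Finset.mem_inter.mpr ⟨ha, haX⟩⟩
    · intro a ha
      obtain ⟨X, _, haX⟩ := Finset.mem_biUnion.mp ha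
      exact (Finset.mem_inter.mp haX).1
  have hsum : ∀ i, ∑ X ∈ T i, (B ∩ X).card = b := by
    intro i
    have h := Finset.card_biUnion (s := T i) (t := fun X => B ∩ X) (hdisjT i)
    rw [← hcover i] at h
    exact h.symm
  have hk2 : ∀ i, ∀ X ∈ T i, 2 ≤ (B ∩ X).card := by
    intro i X hX
    have h1 : 0 < (B ∩ X).card := Finset.card_pos.mpr ((hmemT i X).mp hX).2
    have h2 := hcon i X ((hmemT i X).mp hX).1
    omega
  have hsq : ∀ n : ℕ, n * n - n = n * (n - 1) := by
    intro n
    cases n with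
    | zero => rfl
    | succ k => rw [Nat.succ_sub_one, Nat.mul_succ, Nat.add_sub_cancel]
  have hScard : ∀ i, (S i).card = ∑ X ∈ T i, (B ∩ X).card * ((B ∩ X).card - 1) := by
    intro i
    rw [hS]
    rw [Finset.card_biUnion]
    · exact Finset.sum_congr rfl (fun X _ => by rw [Finset.offDiag_card, hsq])
    · intro X hX Y hY hXY
      rw [Function.onFun, Finset.disjoint_left]
      intro p hpX hpY
      obtain ⟨h1, _, _⟩ := Finset.mem_offDiag.mp hpX
      obtain ⟨h1', _, _⟩ := Finset.mem_offDiag.mp hpY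
      exact (Finset.disjoint_left.mp (hdisjT i X hX Y hY hXY)) h1 h1'
  have hlow : ∀ i, (if Even b then b else b + 3) ≤ (S i).card := by
    intro i
    rw [hScard i]
    by_cases hEv : Even b
    · rw [if_pos hEv]
      calc b = ∑ X ∈ T i, (B ∩ X).card := (hsum i).symm
        _ ≤ ∑ X ∈ T i, (B ∩ X).card * ((B ∩ X).card - 1) :=
          Finset.sum_le_sum (fun X hX => Nat.le_mul_of_pos_right _ (by have := hk2 i X hX; omega))
    · rw [if_neg hEv]
      have hodd : ∃ X ∈ T i, (B ∩ X).card % 2 = 1 := by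
        by_contra h
        push_neg at h
        have hmod : ∀ X ∈ T i, (B ∩ X).card % 2 = 0 := fun X hX => by
          have := h X hX; omega
        have hb0 : b % 2 = 0 := by
          rw [← hsum i, Finset.sum_nat_mod, Finset.sum_congr rfl hmod]
          simp
        exact hEv (Nat.even_iff.mpr hb0)
      obtain ⟨X₀, hX₀, hoddX₀⟩ := hodd
      have h3 : 3 ≤ (B ∩ X₀).card := by have := hk2 i X₀ hX₀; omega
      have e1 : (B ∩ X₀).card + ∑ X ∈ (T i).erase X₀, (B ∩ X).card = b :=
        (Finset.add_sum_erase (T i) (fun X => (B ∩ X).card) hX₀).trans (hsum i)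
      have e2 : ((B ∩ X₀).card * ((B ∩ X₀).card - 1)) +
          ∑ X ∈ (T i).erase X₀, (B ∩ X).card * ((B ∩ X).card - 1) =
          ∑ X ∈ T i, (B ∩ X).card * ((B ∩ X).card - 1) :=
        Finset.add_sum_erase (T i) (fun X => (B ∩ X).card * ((B ∩ X).card - 1)) hX₀
      have e3 : ∑ X ∈ (T i).erase X₀, (B ∩ X).card ≤
          ∑ X ∈ (T i).erase X₀, (B ∩ X).card * ((B ∩ X).card - 1) :=
        Finset.sum_le_sum (fun X hX => Nat.le_mul_of_pos_right _
          (by have := hk2 i X (Finset.mem_of_mem_erase hX); omega))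
      have e4 : (B ∩ X₀).card * 2 ≤ (B ∩ X₀).card * ((B ∩ X₀).card - 1) :=
        Nat.mul_le_mul_left _ (by omega)
      omega
  have hSsub : ∀ i, S i ⊆ B.offDiag := by
    intro i p hp
    rw [hS] at hp
    obtain ⟨X, hX, hpX⟩ := Finset.mem_biUnion.mp hp
    obtain ⟨h1, h2, h3⟩ := Finset.mem_offDiag.mp hpX
    exact Finset.mem_offDiag.mpr ⟨(Finset.mem_inter.mp h1).1, (Finset.mem_inter.mp h2).1, h3⟩
  have hSdisj : ∀ i j : Fin t, i ≠ j → Disjoint (S i) (S j) := by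
    intro i j hij
    rw [Finset.disjoint_left]
    intro p hpi hpj
    rw [hS] at hpi hpj
    obtain ⟨X, hX, hpX⟩ := Finset.mem_biUnion.mp hpi
    obtain ⟨Y, hY, hpY⟩ := Finset.mem_biUnion.mp hpj
    obtain ⟨h1, h2, hne⟩ := Finset.mem_offDiag.mp hpX
    obtain ⟨h1', h2', _⟩ := Finset.mem_offDiag.mp hpY
    have hle := horth i j hij X ((hmemT i X).mp hX).1 Y ((hmemT j Y).mp hY).1
    have hp1 : p.1 ∈ X ∩ Y :=
      Finset.mem_inter.mpr ⟨(Finset.mem_inter.mp h1).2, (Finset.mem_inter.mp h1').2⟩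
    have hp2 : p.2 ∈ X ∩ Y :=
      Finset.mem_inter.mpr ⟨(Finset.mem_inter.mp h2).2, (Finset.mem_inter.mp h2').2⟩
    have : 1 < (X ∩ Y).card := Finset.one_lt_card.mpr ⟨p.1, hp1, p.2, hp2, hne⟩
    omega
  have hoffB : B.offDiag.card = b * (b - 1) := by
    rw [Finset.offDiag_card, ← hb, hsq]
  have htot : t * (if Even b then b else b + 3) ≤ b * (b - 1) := by
    calc t * (if Even b then b else b + 3)
        = ∑ _i : Fin t, (if Even b then b else b + 3) := by
          rw [Finset.sum_const, Finset.card_univ, Fintype.card_fin, smul_eq_mul]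
      _ ≤ ∑ i : Fin t, (S i).card := Finset.sum_le_sum (fun i _ => hlow i)
      _ = (Finset.univ.biUnion S).card :=
          (Finset.card_biUnion (fun i _ j _ h => hSdisj i j h)).symm
      _ ≤ B.offDiag.card := Finset.card_le_card (Finset.biUnion_subset.mpr (fun i _ => hSsub i))
      _ = b * (b - 1) := hoffB
  have htot' : (if Even b then t * b else t * (b + 3)) ≤ b * (b - 1) := by
    by_cases h : Even b <;> simp [h] at htot ⊢ <;> exact htot
  have := hm₂ b hb1 htot'
  omega
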